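/- For every integer p ≥ 1, the polynomials T_{2p}(y) and y·T_{2p+1}(y) are coprime in ℚ[y] (equivalently ℂ[y]). -/

import Mathlib

open Polynomial Polynomial.Chebyshev

/-- Consecutive Chebyshev polynomials are coprime. -/
lemma chebyshev_consecutive_coprime (n : ℤ) :
    IsCoprime (T ℚ n) (T ℚ (n + 1)) := by
  induction n using Polynomial.Chebyshev.induct with
  | zero => simpa using isCoprime_one_left
  | one =>
      refine ⟨2 * X, -1, ?_⟩
      rw [show ((1:ℤ) + 1) = 2 by norm_num, T_two, T_one]
      ring
  | add_two n ih1 ih2 =>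
      have h : T ℚ (n + 2 + 1) = -T ℚ (n + 1) + T ℚ (n + 2) * (2 * X) := by
        have h3 : ((n:ℤ) + 1 + 2) = (n:ℤ) + 2 + 1 := by ring
        have := T_add_two ℚ (n + 1)
        rw [h3, show ((n:ℤ) + 1 + 1) = (n:ℤ) + 2 by ring] at this
        linear_combination this
      rw [h]
      exact (ih1.symm.neg_right).add_mul_left_right _
  | neg_add_one n ih1 ih2 =>
      have e1 : T ℚ (-n - 1) = T ℚ (n + 1) := by
        rw [show (-(n:ℤ) - 1) = -((n:ℤ)+1) by ring, T_neg]
      have e2 : T ℚ (-n - 1 + 1) = T ℚ n := by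
        rw [show (-(n:ℤ) - 1 + 1) = -(n:ℤ) by ring, T_neg]
      rw [e1, e2]
      have h1 : T ℚ (-n) = T ℚ n := T_neg ℚ n
      have h2 : T ℚ (-n + 1) = T ℚ (n - 1) := by
        rw [show (-(n:ℤ) + 1) = -((n:ℤ)-1) by ring, T_neg]
      rw [h1, h2] at ih1
      -- ih1 : IsCoprime (T n) (T (n-1)); want IsCoprime (T (n+1)) (T n)
      have h : T ℚ (n + 1) = -T ℚ (n - 1) + T ℚ n * (2 * X) := by
        linear_combination T_add_one ℚ n
      rw [h]
      exact (ih1.symm.neg_left).add_mul_left_left _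

/-- The even-index Chebyshev polynomials do not vanish at 0 (over ℚ). -/
lemma chebyshev_even_eval_zero_ne (n : ℤ) : (T ℚ (2 * n)).eval 0 ≠ 0 := by
  have key := T_mul_T ℚ n n
  have hid : 2 * T ℚ n * T ℚ n = T ℚ (2 * n) + 1 := by
    simpa [two_mul] using key
  intro h0
  have heval : 2 * (T ℚ n).eval 0 * (T ℚ n).eval 0 = 1 := by
    have := congrArg (Polynomial.eval (0 : ℚ)) hid
    simp [h0] at this
    linarith
  set a : ℚ := (T ℚ n).eval 0 with ha
  have hq : (2:ℝ) * (a:ℝ) * (a:ℝ) = 1 := by exact_mod_cast heval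
  have h2 : ((2 * a : ℚ) : ℝ) ^ 2 = 2 := by push_cast; nlinarith
  have hirr : Irrational (Real.sqrt 2) := irrational_sqrt_two
  have habs : (|((2*a : ℚ) : ℝ)|) = Real.sqrt 2 := by
    rw [← Real.sqrt_sq_eq_abs, h2]
  rcases abs_cases ((2*a : ℚ) : ℝ) with ⟨he, _⟩ | ⟨he, _⟩
  · exact hirr ⟨2*a, by rw [← habs, he]⟩
  · exact hirr ⟨-(2*a), by rw [Rat.cast_neg, ← habs, he]⟩

/-- For every integer `p ≥ 1`, `T_{2p}(y)` and `y·T_{2p+1}(y)` are coprime in `ℚ[y]`. -/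
theorem chebyshev_T_coprime_X_mul_T (p : ℤ) (hp : 1 ≤ p) :
    IsCoprime (T ℚ (2 * p)) ((X : ℚ[X]) * T ℚ (2 * p + 1)) := by
  refine IsCoprime.mul_right ?_ (chebyshev_consecutive_coprime (2 * p))
  refine ((Polynomial.irreducible_X (R := ℚ)).coprime_iff_not_dvd.2 ?_).symm
  rw [Polynomial.X_dvd_iff]
  have := chebyshev_even_eval_zero_ne p
  rwa [Polynomial.coeff_zero_eq_eval_zero]
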